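/- arXiv:0806.4919 — 5 statements merged into one kernel-verified Lean document; each statement's English description precedes it below -/
import Mathlib

section
/- Let $T(j)$, $B(j)$ be real $2\times 2$ matrices and $(a(j))_{j\ge 1}$ real $2\times 1$ vectors with $a(j+1)=T(j)a(j)$ for all $j$, $a(j)\to 0$ as $j\to\infty$, and $\sum_{j=1}^\infty \|B(j)a(j)\|^2<\infty$. Suppose there is a real symmetric $2\times 2$ matrix $C$ with eigenvalues $0$ and $\lambda<0$ such that $(T(n)^t J T(m)-J)/(m-n)=B(n)^t C B(m)$ for all $m\ne n$, where $J=\begin{pmatrix}0&-1\\1&0\end{pmatrix}$. Define $\phi(j)=|\lambda|^{1/2}\langle v_\lambda, B(j)a(j)\rangle$, where $v_\lambda$ is a real unit eigenvector of $C$ for $\lambda$. Then for all $m\ne n$, $\frac{\langle Ja(m),a(n)\rangle}{m-n}=\sum_{k=1}^\infty \phi(m+k-1)\phi(n+k-1)$. -/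
open Matrix Filter

/-- Theorem 2.1: a discrete Tracy–Widom kernel factors as the square of a Hankel matrix. -/
theorem discrete_tracy_widom_hankel_square
    (T B : ℕ → Matrix (Fin 2) (Fin 2) ℝ) (a : ℕ → Fin 2 → ℝ)
    (C : Matrix (Fin 2) (Fin 2) ℝ) (lam : ℝ) (v : Fin 2 → ℝ)
    (J : Matrix (Fin 2) (Fin 2) ℝ) (hJ : J = !![0, -1; 1, 0])
    (hrec : ∀ j, 1 ≤ j → a (j + 1) = T j *ᵥ a j)
    (hdecay : Tendsto a atTop (nhds 0))
    (hsum : Summable (fun j => (B j *ᵥ a j) ⬝ᵥ (B j *ᵥ a j)))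
    (hCsymm : C.IsSymm) (hlam : lam < 0)
    (hv : C *ᵥ v = lam • v) (hvunit : v ⬝ᵥ v = 1)
    (hker : ∃ w : Fin 2 → ℝ, w ≠ 0 ∧ C *ᵥ w = 0)
    (hTW : ∀ m n : ℕ, 1 ≤ m → 1 ≤ n → m ≠ n →
      (1 / ((m : ℝ) - n)) • ((T n)ᵀ * J * T m - J) = (B n)ᵀ * C * B m)
    (phi : ℕ → ℝ)
    (hphi : ∀ j, phi j = Real.sqrt |lam| * (v ⬝ᵥ (B j *ᵥ a j))) :
    ∀ m n : ℕ, 1 ≤ m → 1 ≤ n → m ≠ n →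
      ((J *ᵥ a m) ⬝ᵥ a n) / ((m : ℝ) - n) =
        ∑' k : ℕ, phi (m + k) * phi (n + k) := by
  have hlam0 : lam ≠ 0 := ne_of_lt hlam
  have habs : |lam| = -lam := abs_of_neg hlam
  -- eigenvector equations
  have h0 : C 0 0 * v 0 + C 0 1 * v 1 = lam * v 0 := by
    have := congrFun hv 0
    simpa [Matrix.mulVec, dotProduct, Fin.sum_univ_two] using this
  have h1 : C 1 0 * v 0 + C 1 1 * v 1 = lam * v 1 := by
    have := congrFun hv 1
    simpa [Matrix.mulVec, dotProduct, Fin.sum_univ_two] using this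
  have hsymm : C 1 0 = C 0 1 := hCsymm.apply 0 1
  have hvv : v 0 * v 0 + v 1 * v 1 = 1 := by
    simpa [dotProduct, Fin.sum_univ_two] using hvunit
  obtain ⟨w, hw0, hwC⟩ := hker
  have e3 : C 0 0 * w 0 + C 0 1 * w 1 = 0 := by
    have := congrFun hwC 0
    simpa [Matrix.mulVec, dotProduct, Fin.sum_univ_two] using this
  have e4 : C 1 0 * w 0 + C 1 1 * w 1 = 0 := by
    have := congrFun hwC 1
    simpa [Matrix.mulVec, dotProduct, Fin.sum_univ_two] using this
  -- w is orthogonal to v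
  have e5 : v 0 * w 0 + v 1 * w 1 = 0 := by
    have h : lam * (v 0 * w 0 + v 1 * w 1) = 0 := by
      linear_combination (-(w 0)) * h0 - w 1 * h1 + v 0 * e3 + v 1 * e4
        - (v 1 * w 0 - v 0 * w 1) * hsymm
    rcases mul_eq_zero.mp h with h | h
    · exact absurd h hlam0
    · exact h
  have hc : w 1 * v 0 - w 0 * v 1 ≠ 0 := by
    intro hcz
    apply hw0
    have hw00 : w 0 = 0 := by
      linear_combination (-(w 0)) * hvv + v 0 * e5 - v 1 * hcz
    have hw11 : w 1 = 0 := by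
      linear_combination (-(w 1)) * hvv + v 1 * e5 + v 0 * hcz
    funext i
    fin_cases i <;> simp [hw00, hw11]
  -- entries of C
  have hC00 : C 0 0 = lam * (v 0 * v 0) := by
    have h : (C 0 0 - lam * (v 0 * v 0)) * (w 1 * v 0 - w 0 * v 1) = 0 := by
      linear_combination w 1 * h0 - v 1 * e3 - lam * v 0 * w 1 * hvv + lam * v 0 * v 1 * e5
    rcases mul_eq_zero.mp h with h | h
    · linarith
    · exact absurd h hc
  have hC11 : C 1 1 = lam * (v 1 * v 1) := by
    have h : (C 1 1 - lam * (v 1 * v 1)) * (w 1 * v 0 - w 0 * v 1) = 0 := by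
      linear_combination v 0 * e4 - w 0 * h1 + lam * v 1 * w 0 * hvv - lam * v 0 * v 1 * e5
    rcases mul_eq_zero.mp h with h | h
    · linarith
    · exact absurd h hc
  have hA : C 0 1 * v 1 = lam * v 0 * (v 1 * v 1) := by
    linear_combination h0 - v 0 * hC00 - lam * v 0 * hvv
  have hB : C 0 1 * v 0 = lam * v 1 * (v 0 * v 0) := by
    linear_combination h1 - v 0 * hsymm - v 1 * hC11 - lam * v 1 * hvv
  have hC01 : C 0 1 = lam * (v 0 * v 1) := by
    linear_combination v 0 * hB + v 1 * hA - (C 0 1 - lam * (v 0 * v 1)) * hvv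
  have hC10 : C 1 0 = lam * (v 0 * v 1) := by rw [hsymm, hC01]
  -- the quadratic form of C
  have hCform : ∀ u z : Fin 2 → ℝ, (C *ᵥ u) ⬝ᵥ z = lam * (v ⬝ᵥ u) * (v ⬝ᵥ z) := by
    intro u z
    simp only [Matrix.mulVec, dotProduct, Fin.sum_univ_two]
    linear_combination (u 0 * z 0) * hC00 + (u 1 * z 0) * hC01 + (u 0 * z 1) * hC10
      + (u 1 * z 1) * hC11
  -- conjugation identity
  have haux : ∀ (M P Q : Matrix (Fin 2) (Fin 2) ℝ) (x y : Fin 2 → ℝ),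
      ((Qᵀ * M * P) *ᵥ x) ⬝ᵥ y = (M *ᵥ (P *ᵥ x)) ⬝ᵥ (Q *ᵥ y) := by
    intro M P Q x y
    simp only [Matrix.mulVec, dotProduct, Matrix.mul_apply, Matrix.transpose_apply,
      Fin.sum_univ_two]
    ring
  have hss : Real.sqrt |lam| * Real.sqrt |lam| = -lam := by
    rw [Real.mul_self_sqrt (abs_nonneg lam), habs]
  -- summability of the squares
  have hphibd : ∀ j, phi j ^ 2 ≤ |lam| * ((B j *ᵥ a j) ⬝ᵥ (B j *ᵥ a j)) := by
    intro j
    have h1' : (v ⬝ᵥ (B j *ᵥ a j)) ^ 2 ≤ (B j *ᵥ a j) ⬝ᵥ (B j *ᵥ a j) := by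
      simp only [dotProduct, Fin.sum_univ_two]
      nlinarith [sq_nonneg ((B j *ᵥ a j) 0 * v 1 - (B j *ᵥ a j) 1 * v 0), hvv,
        sq_nonneg (v 0 * (B j *ᵥ a j) 0 + v 1 * (B j *ᵥ a j) 1)]
    rw [hphi j, mul_pow, Real.sq_sqrt (abs_nonneg lam)]
    exact mul_le_mul_of_nonneg_left h1' (abs_nonneg lam)
  have hsq : Summable fun j => phi j ^ 2 :=
    Summable.of_nonneg_of_le (fun j => sq_nonneg _) hphibd (hsum.mul_left |lam|)
  have hsqm : ∀ j : ℕ, Summable fun k => phi (j + k) ^ 2 := by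
    intro j
    simpa [Nat.add_comm j] using (summable_nat_add_iff j).2 hsq
  -- main part
  intro m n hm hn hmn
  have hmnR : (m : ℝ) ≠ (n : ℝ) := by exact_mod_cast hmn
  set F : ℕ → ℝ := fun k => ((J *ᵥ a (m + k)) ⬝ᵥ a (n + k)) / ((m : ℝ) - n) with hF
  -- the telescoping step
  have hstep : ∀ k : ℕ, F k - F (k + 1) = phi (m + k) * phi (n + k) := by
    intro k
    have hm1 : 1 ≤ m + k := le_trans hm (Nat.le_add_right m k)
    have hn1 : 1 ≤ n + k := le_trans hn (Nat.le_add_right n k)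
    have hx : a (m + (k + 1)) = T (m + k) *ᵥ a (m + k) := hrec (m + k) hm1
    have hy : a (n + (k + 1)) = T (n + k) *ᵥ a (n + k) := hrec (n + k) hn1
    have hTWk := hTW (m + k) (n + k) hm1 hn1 (by omega)
    have hcast : ((m + k : ℕ) : ℝ) - ((n + k : ℕ) : ℝ) = (m : ℝ) - n := by
      push_cast; ring
    rw [hcast] at hTWk
    have happ : (((1 / ((m : ℝ) - n)) • ((T (n + k))ᵀ * J * T (m + k) - J)) *ᵥ a (m + k))
          ⬝ᵥ a (n + k)
        = (((B (n + k))ᵀ * C * B (m + k)) *ᵥ a (m + k)) ⬝ᵥ a (n + k) := by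
      rw [hTWk]
    rw [Matrix.smul_mulVec, smul_dotProduct, Matrix.sub_mulVec,
      sub_dotProduct, smul_eq_mul] at happ
    rw [haux C (B (m + k)) (B (n + k)) (a (m + k)) (a (n + k)), hCform] at happ
    simp only [hF]
    rw [hx, hy, ← haux J (T (m + k)) (T (n + k)) (a (m + k)) (a (n + k)),
      hphi (m + k), hphi (n + k)]
    linear_combination (-1 : ℝ) * happ
      - ((v ⬝ᵥ (B (m + k) *ᵥ a (m + k))) * (v ⬝ᵥ (B (n + k) *ᵥ a (n + k)))) * hss
  -- F tends to 0
  have hAi : ∀ (j : ℕ) (i : Fin 2), Tendsto (fun k => a (j + k) i) atTop (nhds 0) := by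
    intro j i
    have hj : Tendsto (fun k => j + k) atTop atTop :=
      tendsto_atTop_mono (fun k => Nat.le_add_left k j) tendsto_id
    exact ((continuous_apply i).tendsto (0 : Fin 2 → ℝ)).comp (hdecay.comp hj)
  have hFeq : F = fun k =>
      (a (m + k) 0 * a (n + k) 1 - a (m + k) 1 * a (n + k) 0) / ((m : ℝ) - n) := by
    funext k
    simp only [hF]
    rw [hJ]
    simp [Matrix.mulVec, dotProduct, Fin.sum_univ_two, Matrix.vecHead, Matrix.vecTail]
    ring
  have hFlim : Tendsto F atTop (nhds 0) := by
    rw [hFeq]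
    have := (((hAi m 0).mul (hAi n 1)).sub ((hAi m 1).mul (hAi n 0))).div_const
      ((m : ℝ) - n)
    simpa using this
  -- summability of the Hankel products
  have hS : Summable fun k => phi (m + k) * phi (n + k) := by
    apply Summable.of_abs
    apply Summable.of_nonneg_of_le (fun k => abs_nonneg _) (fun k => ?_)
      (((hsqm m).add (hsqm n)).div_const 2)
    have := abs_mul (phi (m + k)) (phi (n + k))
    nlinarith [sq_nonneg (|phi (m + k)| - |phi (n + k)|), sq_abs (phi (m + k)),
      sq_abs (phi (n + k)), abs_nonneg (phi (m + k)), abs_nonneg (phi (n + k))]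
  -- telescoping
  have hHas : HasSum (fun k => phi (m + k) * phi (n + k)) (F 0) := by
    rw [hS.hasSum_iff_tendsto_nat]
    have hps : ∀ N, ∑ k ∈ Finset.range N, phi (m + k) * phi (n + k) = F 0 - F N := by
      intro N
      calc ∑ k ∈ Finset.range N, phi (m + k) * phi (n + k)
          = ∑ k ∈ Finset.range N, (F k - F (k + 1)) :=
            Finset.sum_congr rfl (fun k _ => (hstep k).symm)
        _ = F 0 - F N := Finset.sum_range_sub' F N
    simp only [hps]
    simpa using tendsto_const_nhds.sub hFlim
  rw [hHas.tsum_eq]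
  simp [hF]
end

section
/- With hypotheses as in Theorem 2.1, if $K(m,n)=\langle Ja(m),a(n)\rangle/(m-n)$ for $m\ne n$, then $K(m+1,n+1)-K(m,n)=-\phi(m)\phi(n)$ for all $m\ne n$, where $\phi(j)=|\lambda|^{1/2}\langle v_\lambda, B(j)a(j)\rangle$. -/
open Matrix Filter

/-- The key difference identity (2.8) in the proof of Theorem 2.1. -/
theorem tracy_widom_kernel_difference
    (T B : ℕ → Matrix (Fin 2) (Fin 2) ℝ) (a : ℕ → Fin 2 → ℝ)
    (C : Matrix (Fin 2) (Fin 2) ℝ) (lam : ℝ) (v : Fin 2 → ℝ)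
    (J : Matrix (Fin 2) (Fin 2) ℝ) (hJ : J = !![0, -1; 1, 0])
    (hrec : ∀ j, 1 ≤ j → a (j + 1) = T j *ᵥ a j)
    (hdecay : Tendsto a atTop (nhds 0))
    (hsum : Summable (fun j => (B j *ᵥ a j) ⬝ᵥ (B j *ᵥ a j)))
    (hCsymm : C.IsSymm) (hlam : lam < 0)
    (hv : C *ᵥ v = lam • v) (hvunit : v ⬝ᵥ v = 1)
    (hker : ∃ w : Fin 2 → ℝ, w ≠ 0 ∧ C *ᵥ w = 0)
    (hTW : ∀ m n : ℕ, 1 ≤ m → 1 ≤ n → m ≠ n →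
      (1 / ((m : ℝ) - n)) • ((T n)ᵀ * J * T m - J) = (B n)ᵀ * C * B m)
    (phi : ℕ → ℝ)
    (hphi : ∀ j, phi j = Real.sqrt |lam| * (v ⬝ᵥ (B j *ᵥ a j)))
    (K : ℕ → ℕ → ℝ)
    (hK : ∀ m n : ℕ, m ≠ n → K m n = ((J *ᵥ a m) ⬝ᵥ a n) / ((m : ℝ) - n)) :
    ∀ m n : ℕ, 1 ≤ m → 1 ≤ n → m ≠ n →
      K (m + 1) (n + 1) - K m n = -(phi m * phi n) := by
  have hlam0 : lam ≠ 0 := ne_of_lt hlam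
  -- eigenvalue equations in coordinates
  have hv0 := congrFun hv 0
  have hv1 := congrFun hv 1
  simp [Matrix.mulVec, dotProduct, Fin.sum_univ_two] at hv0 hv1
  have hvu : v 0 * v 0 + v 1 * v 1 = 1 := by
    simpa [dotProduct, Fin.sum_univ_two] using hvunit
  have hsymm : C 1 0 = C 0 1 := by
    have := congrFun (congrFun hCsymm.eq 0) 1
    simpa [Matrix.transpose_apply] using this
  obtain ⟨w, hw0, hCw⟩ := hker
  have hw0' := congrFun hCw 0
  have hw1' := congrFun hCw 1
  simp [Matrix.mulVec, dotProduct, Fin.sum_univ_two] at hw0' hw1'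
  -- orthogonality of v and w
  have hvw : v 0 * w 0 + v 1 * w 1 = 0 := by
    have h : lam * (v 0 * w 0 + v 1 * w 1) = 0 := by
      linear_combination (-(w 0)) * hv0 - w 1 * hv1 + v 0 * hw0' + v 1 * hw1'
        + (v 0 * w 1 - v 1 * w 0) * hsymm
    rcases mul_eq_zero.mp h with h | h
    · exact absurd h hlam0
    · exact h
  have hc : v 0 * w 1 - v 1 * w 0 ≠ 0 := by
    intro h
    apply hw0
    funext i
    have hwz0 : w 0 = 0 := by linear_combination v 0 * hvw - v 1 * h - w 0 * hvu
    have hwz1 : w 1 = 0 := by linear_combination v 1 * hvw + v 0 * h - w 1 * hvu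
    fin_cases i <;> simp [hwz0, hwz1]
  -- C applied to the orthogonal direction is zero
  have hCu0 : C 0 0 * v 1 - C 0 1 * v 0 = 0 := by
    have h : (v 0 * w 1 - v 1 * w 0) * (C 0 0 * v 1 - C 0 1 * v 0) = 0 := by
      linear_combination (-(v 0 * v 0 + v 1 * v 1)) * hw0' + (C 0 0 * v 0 + C 0 1 * v 1) * hvw
    exact (mul_eq_zero.mp h).resolve_left hc
  have hCu1 : C 1 0 * v 1 - C 1 1 * v 0 = 0 := by
    have h : (v 0 * w 1 - v 1 * w 0) * (C 1 0 * v 1 - C 1 1 * v 0) = 0 := by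
      linear_combination (-(v 0 * v 0 + v 1 * v 1)) * hw1' + (C 1 0 * v 0 + C 1 1 * v 1) * hvw
    exact (mul_eq_zero.mp h).resolve_left hc
  -- entries of C
  have hC00 : C 0 0 = lam * v 0 * v 0 := by
    linear_combination v 0 * hv0 + v 1 * hCu0 - C 0 0 * hvu
  have hC01 : C 0 1 = lam * v 0 * v 1 := by
    linear_combination v 1 * hv0 - v 0 * hCu0 - C 0 1 * hvu
  have hC10 : C 1 0 = lam * v 1 * v 0 := by
    linear_combination v 0 * hv1 + v 1 * hCu1 - C 1 0 * hvu
  have hC11 : C 1 1 = lam * v 1 * v 1 := by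
    linear_combination v 1 * hv1 - v 0 * hCu1 - C 1 1 * hvu
  -- main computation
  intro m n hm hn hmn
  have hne : (m : ℝ) - n ≠ 0 := sub_ne_zero.mpr (by exact_mod_cast hmn)
  have hM := hTW m n hm hn hmn
  have hM' : (T n)ᵀ * J * T m - J = ((m : ℝ) - n) • ((B n)ᵀ * C * B m) := by
    rw [← hM, smul_smul, one_div, mul_inv_cancel₀ hne, one_smul]
  have e : ∀ p q, ((T n)ᵀ * J * T m) p q - J p q
      = ((m : ℝ) - n) * (((B n)ᵀ * C * B m) p q) := by
    intro p q
    have := congrFun (congrFun hM' p) q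
    simpa [Matrix.sub_apply, Matrix.smul_apply, smul_eq_mul] using this
  have e00 := e 0 0
  have e01 := e 0 1
  have e10 := e 1 0
  have e11 := e 1 1
  simp only [Matrix.mul_apply, Fin.sum_univ_two, Matrix.transpose_apply, hJ,
    Matrix.cons_val', Matrix.cons_val_zero, Matrix.cons_val_one, Matrix.head_cons,
    Matrix.empty_val', Matrix.cons_val_fin_one, Matrix.head_fin_const,
    hC00, hC01, hC10, hC11] at e00 e01 e10 e11
  set s := Real.sqrt |lam| with hs_def
  have hs : s * s = -lam := by
    rw [hs_def, Real.mul_self_sqrt (abs_nonneg lam), abs_of_neg hlam]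
  have key : (J *ᵥ (T m *ᵥ a m)) ⬝ᵥ (T n *ᵥ a n) - (J *ᵥ a m) ⬝ᵥ a n
      = ((m : ℝ) - n) * (-(phi m * phi n)) := by
    rw [hphi, hphi]
    simp only [Matrix.mulVec, dotProduct, Fin.sum_univ_two, hJ,
      Matrix.cons_val', Matrix.cons_val_zero, Matrix.cons_val_one, Matrix.head_cons,
      Matrix.empty_val', Matrix.cons_val_fin_one, Matrix.head_fin_const]
    linear_combination (a n 0 * a m 0) * e00 + (a n 0 * a m 1) * e01
      + (a n 1 * a m 0) * e10 + (a n 1 * a m 1) * e11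
      + (((m : ℝ) - n) * (v 0 * (B m 0 0 * a m 0 + B m 0 1 * a m 1)
          + v 1 * (B m 1 0 * a m 0 + B m 1 1 * a m 1))
        * (v 0 * (B n 0 0 * a n 0 + B n 0 1 * a n 1)
          + v 1 * (B n 1 0 * a n 0 + B n 1 1 * a n 1))) * hs
  rw [hK (m + 1) (n + 1) (by omega), hK m n hmn, hrec m hm, hrec n hn]
  have hcast : ((m + 1 : ℕ) : ℝ) - ((n + 1 : ℕ) : ℝ) = (m : ℝ) - n := by
    push_cast; ring
  rw [hcast, div_sub_div_same, key, mul_comm, mul_div_assoc, div_self hne, mul_one]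
end

section
/- Let $\theta\in\mathbb{R}$ and define $p_0(\theta)=1$, $p_1(\theta)=\theta$, and $p_{n+1}(\theta)=\frac{\theta}{n+1}p_n(\theta)-p_{n-1}(\theta)$. Then the generating function $f(z)=\sum_{j=0}^\infty p_j(\theta)z^j$ satisfies the differential equation $(1+z^2)f'(z)+(2z-\theta)f(z)=0$ with $f(0)=1$, on a neighborhood of $0$. -/
/-- Remark 4.2: the generating function `f(z) = ∑ p_j(θ) zʲ` of the sequence
defined by `p₀ = 1`, `p₁ = θ`, `p_{n+1} = (θ/(n+1)) p_n - p_{n-1}` satisfies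
`(1+z²)f'(z) + (2z-θ)f(z) = 0`, `f(0) = 1`, on a neighbourhood of `0`. -/
theorem generating_function_ode
    (θ : ℝ) (p : ℕ → ℝ)
    (hp0 : p 0 = 1) (hp1 : p 1 = θ)
    (hrec : ∀ n : ℕ, 1 ≤ n → p (n + 1) = θ / ((n : ℝ) + 1) * p n - p (n - 1))
    (f : ℝ → ℝ) (hf : ∀ z : ℝ, f z = ∑' j : ℕ, p j * z ^ j) :
    f 0 = 1 ∧
    ∃ ε > (0 : ℝ), ∀ z : ℝ, |z| < ε →
      DifferentiableAt ℝ f z ∧ (1 + z ^ 2) * deriv f z + (2 * z - θ) * f z = 0 := by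
  have hf0 : f 0 = 1 := by
    rw [hf 0, tsum_eq_single 0 (fun b hb => by
      rw [zero_pow hb, mul_zero]), hp0, pow_zero, mul_one]
  refine ⟨hf0, ?_⟩
  set B : ℝ := 1 + |θ| with hB
  have hB1 : (1 : ℝ) ≤ B := by simp [hB, abs_nonneg]
  have hB0 : (0 : ℝ) < B := lt_of_lt_of_le one_pos hB1
  -- bound |p n| ≤ B ^ n
  have key : ∀ n : ℕ, |p n| ≤ B ^ n ∧ |p (n + 1)| ≤ B ^ (n + 1) := by
    intro n
    induction n with
    | zero =>
      constructor
      · simp [hp0]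
      · rw [hp1, pow_one, hB]
        linarith [abs_nonneg θ]
    | succ m ih =>
      refine ⟨ih.2, ?_⟩
      have hr := hrec (m + 1) (Nat.le_add_left 1 m)
      simp only [Nat.add_sub_cancel] at hr
      push_cast at hr
      have h1 : |p (m + 1 + 1)| ≤ |θ / ((m : ℝ) + 1 + 1)| * |p (m + 1)| + |p m| := by
        rw [hr]
        calc |θ / ((m : ℝ) + 1 + 1) * p (m + 1) - p m|
            ≤ |θ / ((m : ℝ) + 1 + 1) * p (m + 1)| + |p m| := abs_sub _ _
          _ = |θ / ((m : ℝ) + 1 + 1)| * |p (m + 1)| + |p m| := by rw [abs_mul]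
      have h2 : |θ / ((m : ℝ) + 1 + 1)| ≤ |θ| := by
        rw [abs_div]
        have : |((m : ℝ) + 1 + 1)| = (m : ℝ) + 1 + 1 := by
          rw [abs_of_pos]; positivity
        rw [this]
        apply div_le_self (abs_nonneg θ)
        have : (0:ℝ) ≤ (m:ℝ) := Nat.cast_nonneg m
        linarith
      have h3 : B ^ m ≤ B ^ (m + 1) := pow_le_pow_right₀ hB1 (Nat.le_succ m)
      calc |p (m + 1 + 1)| ≤ |θ / ((m : ℝ) + 1 + 1)| * |p (m + 1)| + |p m| := h1
        _ ≤ |θ| * B ^ (m + 1) + B ^ (m + 1) := by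
            apply add_le_add _ (le_trans ih.1 h3)
            apply mul_le_mul h2 ih.2 (abs_nonneg _) (abs_nonneg _)
        _ = B ^ (m + 1 + 1) := by rw [pow_succ]; ring
  have hpb : ∀ n : ℕ, |p n| ≤ B ^ n := fun n => (key n).1
  set ε : ℝ := 1 / (2 * B) with hε
  have hε0 : (0 : ℝ) < ε := by positivity
  have hεB : ε * B = 1 / 2 := by rw [hε]; field_simp
  refine ⟨ε, hε0, ?_⟩
  -- summability of |p n| * r^n for |r| ≤ ε
  have hsum_pz : ∀ z : ℝ, |z| < ε → Summable (fun n : ℕ => p n * z ^ n) := by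
    intro z hz
    apply Summable.of_norm_bounded (g := fun n : ℕ => (1/2 : ℝ) ^ n)
      (summable_geometric_of_lt_one (by norm_num) (by norm_num))
    intro n
    rw [Real.norm_eq_abs, abs_mul, abs_pow]
    calc |p n| * |z| ^ n ≤ B ^ n * ε ^ n := by
          apply mul_le_mul (hpb n) (pow_le_pow_left₀ (abs_nonneg z) hz.le n)
            (pow_nonneg (abs_nonneg z) n) (pow_nonneg hB0.le n)
      _ = (1/2 : ℝ) ^ n := by rw [← mul_pow, mul_comm, hεB]
  -- the derivative bound
  set u : ℕ → ℝ := fun n => (n : ℝ) * B ^ n * ε ^ (n - 1) with hu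
  have hu_sum : Summable u := by
    rw [← summable_nat_add_iff 1]
    have hhalf : ‖(1/2 : ℝ)‖ < 1 := by
      rw [Real.norm_eq_abs, abs_of_nonneg (by norm_num : (0:ℝ) ≤ 1/2)]
      norm_num
    have h1 : Summable (fun n : ℕ => (n : ℝ) * (1/2 : ℝ) ^ n) := by
      simpa using summable_pow_mul_geometric_of_norm_lt_one 1 (r := (1/2 : ℝ)) hhalf
    have h2 : Summable (fun n : ℕ => (1/2 : ℝ) ^ n) :=
      summable_geometric_of_norm_lt_one hhalf
    have h3 : Summable (fun n : ℕ => ((n : ℝ) * (1/2 : ℝ) ^ n + (1/2 : ℝ) ^ n) * B) :=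
      (h1.add h2).mul_right B
    have heq : (fun n : ℕ => u (n + 1))
        = fun n : ℕ => ((n : ℝ) * (1/2 : ℝ) ^ n + (1/2 : ℝ) ^ n) * B := by
      funext n
      simp only [hu, Nat.add_sub_cancel, Nat.cast_add, Nat.cast_one]
      rw [← hεB, mul_pow]
      ring
    rw [heq]
    exact h3
  have hderiv_bound : ∀ (n : ℕ) (y : ℝ), y ∈ Metric.ball (0:ℝ) ε →
      ‖p n * ((n : ℝ) * y ^ (n - 1))‖ ≤ u n := by
    intro n y hy
    rw [Metric.mem_ball, Real.dist_eq, sub_zero] at hy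
    rw [Real.norm_eq_abs, abs_mul, abs_mul, abs_pow, Nat.abs_cast]
    calc |p n| * ((n : ℝ) * |y| ^ (n - 1)) ≤ B ^ n * ((n : ℝ) * ε ^ (n - 1)) := by
          apply mul_le_mul (hpb n) _ (by positivity) (by positivity)
          apply mul_le_mul_of_nonneg_left _ (Nat.cast_nonneg n)
          exact pow_le_pow_left₀ (abs_nonneg y) hy.le _
      _ = u n := by simp only [hu]; ring
  have hterm_deriv : ∀ (n : ℕ) (y : ℝ),
      HasDerivAt (fun w => p n * w ^ n) (p n * ((n : ℝ) * y ^ (n - 1))) y :=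
    fun n y => (hasDerivAt_pow n y).const_mul (p n)
  -- summability at 0
  have hsum0 : Summable (fun n : ℕ => p n * (0:ℝ) ^ n) := hsum_pz 0 (by simpa using hε0)
  intro z hz
  have hzball : z ∈ Metric.ball (0:ℝ) ε := by
    rw [Metric.mem_ball, Real.dist_eq, sub_zero]; exact hz
  have h0ball : (0:ℝ) ∈ Metric.ball (0:ℝ) ε := by
    rw [Metric.mem_ball, Real.dist_eq, sub_zero]; simpa using hε0
  have hD : HasDerivAt (fun w => ∑' n : ℕ, p n * w ^ n)
      (∑' n : ℕ, p n * ((n : ℝ) * z ^ (n - 1))) z := by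
    exact hasDerivAt_tsum_of_isPreconnected hu_sum Metric.isOpen_ball
      ((convex_ball (0:ℝ) ε).isPreconnected) (fun n y _ => hterm_deriv n y)
      hderiv_bound h0ball hsum0 hzball
  have hfD : HasDerivAt f (∑' n : ℕ, p n * ((n : ℝ) * z ^ (n - 1))) z := by
    have : f = fun w => ∑' n : ℕ, p n * w ^ n := funext hf
    rw [this]; exact hD
  refine ⟨hfD.differentiableAt, ?_⟩
  set D : ℝ := ∑' n : ℕ, p n * ((n : ℝ) * z ^ (n - 1)) with hD_def
  have hderiv_eq : deriv f z = D := hfD.deriv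
  -- summability of the derivative series
  have hsumD : Summable (fun n : ℕ => p n * ((n : ℝ) * z ^ (n - 1))) :=
    Summable.of_norm_bounded hu_sum (fun n => hderiv_bound n z hzball)
  have hDsum : HasSum (fun n : ℕ => p n * ((n : ℝ) * z ^ (n - 1))) D := hsumD.hasSum
  -- shift derivative series: HasSum (fun n => (n+1) * p (n+1) * z^n) D
  have hD' : HasSum (fun n : ℕ => ((n : ℝ) + 1) * p (n + 1) * z ^ n) D := by
    have heq : HasSum
        (fun n : ℕ => (fun m : ℕ => p m * ((m : ℝ) * z ^ (m - 1))) (n + 1)) D := by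
      apply (hasSum_nat_add_iff (f := fun m : ℕ => p m * ((m : ℝ) * z ^ (m - 1))) 1).mpr
      simpa using hDsum
    convert heq using 2 with n
    simp only [Nat.add_sub_cancel]
    push_cast
    ring
  have hF : HasSum (fun n : ℕ => p n * z ^ n) (f z) := by
    rw [hf z]; exact (hsum_pz z hz).hasSum
  -- the z² f' series, shifted
  set q : ℕ → ℝ := fun n => if 2 ≤ n then ((n : ℝ) - 1) * p (n - 1) * z ^ n else 0 with hq
  have hQ : HasSum q (D * z ^ 2) := by
    have h1 : HasSum (fun n : ℕ => ((n : ℝ) + 1) * p (n + 1) * z ^ n * z ^ 2) (D * z ^ 2) :=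
      hD'.mul_right (z ^ 2)
    have h2 : (fun n : ℕ => q (n + 2)) = fun n : ℕ => ((n : ℝ) + 1) * p (n + 1) * z ^ n * z ^ 2 := by
      funext n
      simp only [hq]
      rw [if_pos (by omega)]
      have : (n + 2 : ℕ) - 1 = n + 1 := by omega
      rw [this]
      push_cast
      ring
    have h0 : ∑ i ∈ Finset.range 2, q i = 0 := by
      simp [hq, Finset.sum_range_succ]
    have := (hasSum_nat_add_iff (f := q) 2).mp (by rw [h2]; exact h1)
    rwa [h0, add_zero] at this
  -- the 2z f series, shifted
  set r : ℕ → ℝ := fun n => if 1 ≤ n then 2 * p (n - 1) * z ^ n else 0 with hr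
  have hR : HasSum r (2 * f z * z) := by
    have h1 : HasSum (fun n : ℕ => 2 * (p n * z ^ n) * z) (2 * f z * z) :=
      (hF.mul_left 2).mul_right z
    have h2 : (fun n : ℕ => r (n + 1)) = fun n : ℕ => 2 * (p n * z ^ n) * z := by
      funext n
      simp only [hr]
      rw [if_pos (by omega)]
      have : (n + 1 : ℕ) - 1 = n := by omega
      rw [this, pow_succ]
      ring
    have h0 : ∑ i ∈ Finset.range 1, r i = 0 := by simp [hr]
    have := (hasSum_nat_add_iff (f := r) 1).mp (by rw [h2]; exact h1)
    rwa [h0, add_zero] at this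
  -- combined series
  have htot : HasSum (fun n : ℕ => ((n : ℝ) + 1) * p (n + 1) * z ^ n + q n + r n
      - θ * (p n * z ^ n)) (D + D * z ^ 2 + 2 * f z * z - θ * f z) :=
    ((hD'.add hQ).add hR).sub (hF.mul_left θ)
  -- every term of the combined series is 0
  have hzero : ∀ n : ℕ, ((n : ℝ) + 1) * p (n + 1) * z ^ n + q n + r n
      - θ * (p n * z ^ n) = 0 := by
    intro n
    match n with
    | 0 =>
      simp only [hq, hr]
      norm_num [hp1, hp0]
    | 1 =>
      simp only [hq, hr]
      rw [if_neg (by omega), if_pos le_rfl]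
      have h2 := hrec 1 le_rfl
      norm_num at h2 ⊢
      rw [h2, hp1, hp0]
      ring
    | (m + 2) =>
      simp only [hq, hr]
      rw [if_pos (by omega), if_pos (by omega)]
      have hrec' := hrec (m + 2) (by omega)
      have h1 : (m + 2 : ℕ) - 1 = m + 1 := by omega
      rw [h1] at hrec' ⊢
      have hm : ((m + 2 : ℕ) : ℝ) = (m : ℝ) + 2 := by push_cast; ring
      rw [hm]
      have hcoef : ((m : ℝ) + 2) + 1 ≠ 0 := by positivity
      have hp3 : ((m : ℝ) + 2 + 1) * p (m + 2 + 1) = θ * p (m + 2)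
          - ((m : ℝ) + 2 + 1) * p (m + 1) := by
        rw [hrec']
        push_cast
        field_simp
      have expand : ((m : ℝ) + 2 + 1) * p (m + 2 + 1) * z ^ (m + 2)
          + ((m : ℝ) + 2 - 1) * p (m + 1) * z ^ (m + 2)
          + 2 * p (m + 1) * z ^ (m + 2) - θ * (p (m + 2) * z ^ (m + 2))
          = (((m : ℝ) + 2 + 1) * p (m + 2 + 1) - (θ * p (m + 2)
            - ((m : ℝ) + 2 + 1) * p (m + 1))) * z ^ (m + 2) := by ring
      rw [expand, hp3]
      ring
  have hT0 : D + D * z ^ 2 + 2 * f z * z - θ * f z = 0 := by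
    have h := htot
    simp only [hzero] at h
    exact h.unique hasSum_zero
  rw [hderiv_eq]
  linarith [hT0]
end

section
/- Let $\theta\ne 0$ be real, $T(j)=\begin{pmatrix}\theta/(j+1)&-1\\1&0\end{pmatrix}$, and $B(j)=T(4j)T(4j-1)T(4j-2)T(4j-3)$. Then there is a constant $c(\theta)$ such that $\|B(j)-I+\frac{\theta}{2j}J\|\le c(\theta)/j^2$ for all $j\ge 1$, where $J=\begin{pmatrix}0&-1\\1&0\end{pmatrix}$. -/
set_option maxHeartbeats 1000000
open Matrix
attribute [local instance] Matrix.linftyOpNormedRing Matrix.linftyOpNormedAlgebra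

lemma scalar_bound (θ x a b c d : ℝ) (hx : 1 ≤ x)
    (hadef : a = θ/(4*x+1)) (hbdef : b = θ/(4*x))
    (hcdef : c = θ/(4*x-1)) (hddef : d = θ/(4*x-2)) :
    |a*b*c*d - c*d - a*d - a*b|
    + |a + c - a*b*c - θ/(2*x)|
    + |b*c*d - b - d + θ/(2*x)|
    + |-(b*c)| ≤ 4 * (|θ|+1)^4 / x^2 := by
  have hx0 : (0:ℝ) < x := by linarith
  have ht : 0 ≤ |θ| := abs_nonneg θ
  set t := |θ| with htdef
  have h1 : (0:ℝ) < 4*x+1 := by linarith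
  have h2 : (0:ℝ) < 4*x := by linarith
  have h3 : (0:ℝ) < 4*x-1 := by linarith
  have h4 : (0:ℝ) < 4*x-2 := by linarith
  have ha : |a| ≤ t/x := by
    rw [hadef, abs_div, abs_of_pos h1]; exact div_le_div_of_nonneg_left ht hx0 (by linarith)
  have hb : |b| ≤ t/x := by
    rw [hbdef, abs_div, abs_of_pos h2]; exact div_le_div_of_nonneg_left ht hx0 (by linarith)
  have hc : |c| ≤ t/x := by
    rw [hcdef, abs_div, abs_of_pos h3]; exact div_le_div_of_nonneg_left ht hx0 (by linarith)
  have hd : |d| ≤ t/x := by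
    rw [hddef, abs_div, abs_of_pos h4]; exact div_le_div_of_nonneg_left ht hx0 (by linarith)
  have hq0 : (0:ℝ) ≤ t/x := by positivity
  have hqt : t/x ≤ t := by rw [div_le_iff₀ hx0]; nlinarith
  have ha' : |a| ≤ t := ha.trans hqt
  have hb' : |b| ≤ t := hb.trans hqt
  have habc : |a*b*c| ≤ t*(t/x)*(t/x) := by
    rw [abs_mul, abs_mul]
    exact mul_le_mul (mul_le_mul ha' hb (abs_nonneg _) ht) hc (abs_nonneg _) (by positivity)
  have habcd : |a*b*c*d| ≤ t*t*(t/x)*(t/x) := by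
    rw [abs_mul, abs_mul, abs_mul]
    exact mul_le_mul (mul_le_mul (mul_le_mul ha' hb' (abs_nonneg _) ht) hc (abs_nonneg _)
      (by positivity)) hd (abs_nonneg _) (by positivity)
  have hcd : |c*d| ≤ (t/x)*(t/x) := by
    rw [abs_mul]; exact mul_le_mul hc hd (abs_nonneg _) hq0
  have had : |a*d| ≤ (t/x)*(t/x) := by
    rw [abs_mul]; exact mul_le_mul ha hd (abs_nonneg _) hq0
  have hbc : |b*c| ≤ (t/x)*(t/x) := by
    rw [abs_mul]; exact mul_le_mul hb hc (abs_nonneg _) hq0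
  have hab2 : |a*b| ≤ (t/x)*(t/x) := by
    rw [abs_mul]; exact mul_le_mul ha hb (abs_nonneg _) hq0
  have hbcd : |b*c*d| ≤ t*(t/x)*(t/x) := by
    rw [abs_mul, abs_mul]
    exact mul_le_mul (mul_le_mul hb' hc (abs_nonneg _) ht) hd (abs_nonneg _) (by positivity)
  have key12 : |a + c - θ/(2*x)| ≤ t/x^2 := by
    have hid : a + c - θ/(2*x) = θ / (2*x*(16*x^2-1)) := by
      rw [hadef, hcdef]
      rw [div_add_div _ _ h1.ne' h3.ne', div_sub_div _ _ (mul_ne_zero h1.ne' h3.ne') (by positivity : (2*x:ℝ) ≠ 0)]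
      rw [div_eq_div_iff (mul_ne_zero (mul_ne_zero h1.ne' h3.ne') (by positivity : (2*x:ℝ) ≠ 0)) (by nlinarith : (2*x*(16*x^2-1):ℝ) ≠ 0)]
      ring
    rw [hid, abs_div, abs_of_pos (by nlinarith : (0:ℝ) < 2*x*(16*x^2-1))]
    apply div_le_div_of_nonneg_left ht (by positivity)
    nlinarith [sq_nonneg x, mul_pos hx0 hx0]
  have key21 : |b + d - θ/(2*x)| ≤ t/x^2 := by
    have hid : b + d - θ/(2*x) = θ / (2*x*(4*x-2)) := by
      rw [hbdef, hddef]
      rw [div_add_div _ _ h2.ne' h4.ne', div_sub_div _ _ (mul_ne_zero h2.ne' h4.ne') (by positivity : (2*x:ℝ) ≠ 0)]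
      rw [div_eq_div_iff (mul_ne_zero (mul_ne_zero h2.ne' h4.ne') (by positivity : (2*x:ℝ) ≠ 0)) (by nlinarith : (2*x*(4*x-2):ℝ) ≠ 0)]
      ring
    rw [hid, abs_div, abs_of_pos (by nlinarith : (0:ℝ) < 2*x*(4*x-2))]
    apply div_le_div_of_nonneg_left ht (by positivity)
    nlinarith [sq_nonneg x, mul_pos hx0 hx0]
  have e11 : |a*b*c*d - c*d - a*d - a*b| ≤ t*t*(t/x)*(t/x) + 3*((t/x)*(t/x)) := by
    have u1 := abs_sub (a*b*c*d - c*d - a*d) (a*b)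
    have u2 := abs_sub (a*b*c*d - c*d) (a*d)
    have u3 := abs_sub (a*b*c*d) (c*d)
    linarith
  have e12 : |a + c - a*b*c - θ/(2*x)| ≤ t/x^2 + t*(t/x)*(t/x) := by
    have h : a + c - a*b*c - θ/(2*x) = (a + c - θ/(2*x)) - a*b*c := by ring
    rw [h]
    have := abs_sub (a + c - θ/(2*x)) (a*b*c)
    linarith
  have e21 : |b*c*d - b - d + θ/(2*x)| ≤ t/x^2 + t*(t/x)*(t/x) := by
    have h : b*c*d - b - d + θ/(2*x) = b*c*d - (b + d - θ/(2*x)) := by ring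
    rw [h]
    have := abs_sub (b*c*d) (b + d - θ/(2*x))
    linarith
  have e22 : |-(b*c)| ≤ (t/x)*(t/x) := by rw [abs_neg]; exact hbc
  have hsum : t*t*(t/x)*(t/x) + 3*((t/x)*(t/x)) + (t/x^2 + t*(t/x)*(t/x)) +
      (t/x^2 + t*(t/x)*(t/x)) + (t/x)*(t/x)
      = (t^4 + 2*t^3 + 4*t^2 + 2*t)/x^2 := by
    field_simp
    ring
  have hfin : (t^4 + 2*t^3 + 4*t^2 + 2*t)/x^2 ≤ 4*(t+1)^4/x^2 := by
    rw [div_le_div_iff_of_pos_right (by positivity)]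
    nlinarith [ht, sq_nonneg t, sq_nonneg (t^2)]
  linarith

lemma norm_fin2_le (A : Matrix (Fin 2) (Fin 2) ℝ) :
    ‖A‖ ≤ |A 0 0| + |A 0 1| + |A 1 0| + |A 1 1| := by
  rw [Matrix.linfty_opNorm_def]
  have h : ((Finset.univ : Finset (Fin 2)).sup fun i => ∑ j, ‖A i j‖₊)
      ≤ ‖A 0 0‖₊ + ‖A 0 1‖₊ + ‖A 1 0‖₊ + ‖A 1 1‖₊ := by
    apply Finset.sup_le
    intro i _
    fin_cases i
    · simp only [Fin.sum_univ_two]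
      calc ‖A 0 0‖₊ + ‖A 0 1‖₊ ≤ ‖A 0 0‖₊ + ‖A 0 1‖₊ + (‖A 1 0‖₊ + ‖A 1 1‖₊) := le_self_add
        _ = _ := by ring
    · simp only [Fin.sum_univ_two]
      calc ‖A 1 0‖₊ + ‖A 1 1‖₊ ≤ (‖A 0 0‖₊ + ‖A 0 1‖₊) + (‖A 1 0‖₊ + ‖A 1 1‖₊) := le_add_self
        _ = _ := by ring
  have h2 := NNReal.coe_le_coe.mpr h
  push_cast [Real.norm_eq_abs] at h2 ⊢
  linarith

/-- Estimate (4.5): the four-step products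
`B(j) = T(4j)T(4j-1)T(4j-2)T(4j-3)` satisfy
`B(j) = I - (θ/2j) J + O(1/j²)`. -/
theorem four_step_product_estimate
    (θ : ℝ) (hθ : θ ≠ 0)
    (T : ℕ → Matrix (Fin 2) (Fin 2) ℝ)
    (hT : ∀ j, T j = !![θ / ((j : ℝ) + 1), -1; 1, 0])
    (J : Matrix (Fin 2) (Fin 2) ℝ) (hJ : J = !![0, -1; 1, 0])
    (B : ℕ → Matrix (Fin 2) (Fin 2) ℝ)
    (hB : ∀ j, 1 ≤ j → B j = T (4 * j) * T (4 * j - 1) * T (4 * j - 2) * T (4 * j - 3)) :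
    ∃ c : ℝ, ∀ j : ℕ, 1 ≤ j →
      ‖B j - 1 + (θ / (2 * (j : ℝ))) • J‖ ≤ c / (j : ℝ) ^ 2 := by
  refine ⟨4 * (|θ|+1)^4, fun j hj => ?_⟩
  set x : ℝ := (j : ℝ) with hxdef
  have hx : (1:ℝ) ≤ x := by rw [hxdef]; exact_mod_cast hj
  have c1 : ((4*j : ℕ) : ℝ) = 4*x := by push_cast; ring
  have c2 : ((4*j - 1 : ℕ) : ℝ) = 4*x - 1 := by
    rw [Nat.cast_sub (by omega)]; push_cast; ring
  have c3 : ((4*j - 2 : ℕ) : ℝ) = 4*x - 2 := by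
    rw [Nat.cast_sub (by omega)]; push_cast; ring
  have c4 : ((4*j - 3 : ℕ) : ℝ) = 4*x - 3 := by
    rw [Nat.cast_sub (by omega)]; push_cast; ring
  have hE : B j - 1 + (θ / (2 * x)) • J
      = !![(θ/(4*x+1))*(θ/(4*x))*(θ/(4*x-1))*(θ/(4*x-2)) - (θ/(4*x-1))*(θ/(4*x-2))
             - (θ/(4*x+1))*(θ/(4*x-2)) - (θ/(4*x+1))*(θ/(4*x)),
           θ/(4*x+1) + θ/(4*x-1) - (θ/(4*x+1))*(θ/(4*x))*(θ/(4*x-1)) - θ/(2*x);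
           (θ/(4*x))*(θ/(4*x-1))*(θ/(4*x-2)) - θ/(4*x) - θ/(4*x-2) + θ/(2*x),
           -((θ/(4*x))*(θ/(4*x-1)))] := by
    rw [hB j hj, hT, hT, hT, hT, hJ, c1, c2, c3, c4]
    have e1 : (4:ℝ)*x - 1 + 1 = 4*x := by ring
    have e2 : (4:ℝ)*x - 2 + 1 = 4*x - 1 := by ring
    have e3 : (4:ℝ)*x - 3 + 1 = 4*x - 2 := by ring
    rw [e1, e2, e3]
    ext i k
    fin_cases i <;> fin_cases k <;>
      simp [Matrix.mul_apply, Fin.sum_univ_two, Matrix.one_apply] <;> ring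
  rw [hE]
  refine le_trans (norm_fin2_le _) ?_
  have := scalar_bound θ x (θ/(4*x+1)) (θ/(4*x)) (θ/(4*x-1)) (θ/(4*x-2)) hx rfl rfl rfl rfl
  simpa using this
end

section
/- Let $\beta\ne0$ and let $(b_n)_{n\in\mathbb{Z}}$ be real with $\sum_n n^4 b_n^2<\infty$ and satisfying $2(-n^2+\alpha)b_n+\beta b_{n+1}+\beta b_{n-1}=0$. Then for all $m\ne n$ in $\mathbb{N}$, $\frac{b_{m-1}b_n-b_{n-1}b_m}{m-n}=\frac{2}{\beta}\sum_{k=0}^\infty \big((m+k)+(n+k)\big)\,b_{m+k}\,b_{n+k}$, i.e. the Tracy–Widom kernel equals $(2/\beta)(\Gamma_u\Gamma_v+\Gamma_v\Gamma_u)(m,n)$ where $\Gamma_u=[b_{j+k-1}]$ and $\Gamma_v=[(j+k-1)b_{j+k-1}]$. -/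
open Filter Finset

/-- Theorem 5.1: the Tracy–Widom kernel built from the Fourier coefficients of
a Mathieu function equals `(2/β)(Γ_u Γ_v + Γ_v Γ_u)` entrywise. -/
theorem mathieu_kernel_eq_hankel_anticommutator
    (α β : ℝ) (hβ : β ≠ 0) (b : ℤ → ℝ)
    (hsum : Summable (fun n : ℤ => (n : ℝ) ^ 4 * b n ^ 2))
    (hrec : ∀ n : ℤ, 2 * (-(n : ℝ) ^ 2 + α) * b n + β * b (n + 1) + β * b (n - 1) = 0) :
    ∀ m n : ℤ, 1 ≤ m → 1 ≤ n → m ≠ n →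
      (b (m - 1) * b n - b (n - 1) * b m) / ((m : ℝ) - n) =
        (2 / β) * ∑' k : ℕ,
          (((m : ℝ) + k) + ((n : ℝ) + k)) * b (m + k) * b (n + k) := by
  intro m n hm hn hmn
  have hmn' : (m : ℝ) - n ≠ 0 := sub_ne_zero.mpr (by exact_mod_cast hmn)
  set f : ℕ → ℝ := fun k => (((m : ℝ) + k) + ((n : ℝ) + k)) * b (m + k) * b (n + k) with hf
  set F : ℕ → ℝ := fun k => b (m + k - 1) * b (n + k) - b (n + k - 1) * b (m + k) with hFdef
  -- summability of shifted weighted squares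
  have hb2 : ∀ a : ℤ, Summable (fun k : ℕ => ((a : ℝ) + k) ^ 4 * b (a + k) ^ 2) := by
    intro a
    have hinj : Function.Injective (fun k : ℕ => a + (k : ℤ)) := by
      intro x y h; simpa using h
    refine (hsum.comp_injective hinj).congr fun k => ?_
    show ((a + k : ℤ) : ℝ) ^ 4 * b (a + k) ^ 2 = _
    push_cast
    ring
  set A : ℝ := |(m:ℝ) - n| with hA
  have hC : (0:ℝ) ≤ 2 + A := by positivity
  -- pointwise bound
  have hbound : ∀ k : ℕ, |f k| ≤ (2 + A) *
      (((m:ℝ)+k)^4 * b (m+k)^2 + ((n:ℝ)+k)^4 * b (n+k)^2) := by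
    intro k
    have hk : (0:ℝ) ≤ (k:ℝ) := Nat.cast_nonneg k
    have hm1 : (1:ℝ) ≤ (m:ℝ) := by exact_mod_cast hm
    have hn1 : (1:ℝ) ≤ (n:ℝ) := by exact_mod_cast hn
    have hP : (1:ℝ) ≤ (m:ℝ) + k := by linarith
    have hQ : (1:ℝ) ≤ (n:ℝ) + k := by linarith
    have hP4 : (m:ℝ) + k ≤ ((m:ℝ)+k)^4 := le_self_pow₀ hP (by norm_num)
    have hQ4 : (n:ℝ) + k ≤ ((n:ℝ)+k)^4 := le_self_pow₀ hQ (by norm_num)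
    have habs : |b (m+k) * b (n+k)| ≤ (b (m+k)^2 + b (n+k)^2)/2 := by
      rw [abs_mul]
      nlinarith [sq_nonneg (|b (m+k)| - |b (n+k)|), sq_abs (b (m+k)), sq_abs (b (n+k))]
    have hA1 : (n:ℝ) - m ≤ A := by
      rw [hA, show (n:ℝ) - m = -((m:ℝ)-n) by ring]; exact neg_le_abs _
    have hA2 : (m:ℝ) - n ≤ A := hA ▸ le_abs_self _
    have hPA : ((m:ℝ)+k) + ((n:ℝ)+k) ≤ (2+A) * ((m:ℝ)+k) := by nlinarith
    have hQA : ((m:ℝ)+k) + ((n:ℝ)+k) ≤ (2+A) * ((n:ℝ)+k) := by nlinarith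
    have h1 : |f k| = (((m:ℝ)+k) + ((n:ℝ)+k)) * |b (m+k) * b (n+k)| := by
      show |(((m:ℝ)+k) + ((n:ℝ)+k)) * b (m + k) * b (n + k)| = _
      rw [mul_assoc, abs_mul, abs_of_pos (by linarith)]
    have t1 : (((m:ℝ)+k) + ((n:ℝ)+k)) * b (m+k)^2 ≤ (2+A) * (((m:ℝ)+k)^4 * b (m+k)^2) := by
      nlinarith [mul_le_mul_of_nonneg_right hPA (sq_nonneg (b (m+k))),
        mul_le_mul_of_nonneg_left hP4 (mul_nonneg hC (sq_nonneg (b (m+k))))]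
    have t2 : (((m:ℝ)+k) + ((n:ℝ)+k)) * b (n+k)^2 ≤ (2+A) * (((n:ℝ)+k)^4 * b (n+k)^2) := by
      nlinarith [mul_le_mul_of_nonneg_right hQA (sq_nonneg (b (n+k))),
        mul_le_mul_of_nonneg_left hQ4 (mul_nonneg hC (sq_nonneg (b (n+k))))]
    have h2 : (((m:ℝ)+k) + ((n:ℝ)+k)) * |b (m+k) * b (n+k)| ≤
        (((m:ℝ)+k) + ((n:ℝ)+k)) * ((b (m+k)^2 + b (n+k)^2)/2) :=
      mul_le_mul_of_nonneg_left habs (by linarith)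
    rw [h1]
    calc (((m:ℝ)+k) + ((n:ℝ)+k)) * |b (m+k) * b (n+k)|
        ≤ (((m:ℝ)+k) + ((n:ℝ)+k)) * ((b (m+k)^2 + b (n+k)^2)/2) := h2
      _ ≤ (2+A) * (((m:ℝ)+k)^4 * b (m+k)^2 + ((n:ℝ)+k)^4 * b (n+k)^2) := by
          have hre : (((m:ℝ)+k) + ((n:ℝ)+k)) * ((b (m+k)^2 + b (n+k)^2)/2) =
              ((((m:ℝ)+k) + ((n:ℝ)+k)) * b (m+k)^2 + (((m:ℝ)+k) + ((n:ℝ)+k)) * b (n+k)^2)/2 := by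
            ring
          have hre2 : (2+A) * (((m:ℝ)+k)^4 * b (m+k)^2 + ((n:ℝ)+k)^4 * b (n+k)^2) =
              ((2+A) * (((m:ℝ)+k)^4 * b (m+k)^2) + (2+A) * (((n:ℝ)+k)^4 * b (n+k)^2)) := by
            ring
          rw [hre, hre2]
          have n1 : 0 ≤ (2+A) * (((m:ℝ)+k)^4 * b (m+k)^2) :=
            mul_nonneg hC (mul_nonneg (by positivity) (sq_nonneg _))
          have n2 : 0 ≤ (2+A) * (((n:ℝ)+k)^4 * b (n+k)^2) :=
            mul_nonneg hC (mul_nonneg (by positivity) (sq_nonneg _))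
          linarith
  have hsf : Summable f := by
    apply Summable.of_norm_bounded (((hb2 m).add (hb2 n)).mul_left (2 + A))
    intro k
    simpa [Real.norm_eq_abs] using hbound k
  -- key recurrence step
  have key : ∀ K : ℕ, 2 * ((m:ℝ) - n) * f K = β * (F K - F (K + 1)) := by
    intro K
    have h1 := hrec (m + K)
    have h2 := hrec (n + K)
    simp only [hf, hFdef, Nat.cast_add, Nat.cast_one]
    have e1 : (m + ((K:ℤ)+1) : ℤ) = m + K + 1 := by ring
    have e2 : (n + ((K:ℤ)+1) : ℤ) = n + K + 1 := by ring
    have e3 : (m + ((K:ℤ)+1) - 1 : ℤ) = m + K := by ring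
    have e4 : (n + ((K:ℤ)+1) - 1 : ℤ) = n + K := by ring
    rw [e3, e4, e1, e2]
    push_cast at h1 h2 ⊢
    linear_combination b (m + (K:ℤ)) * h2 - b (n + (K:ℤ)) * h1
  -- telescoping
  have tel : ∀ K : ℕ, 2 * ((m:ℝ) - n) * ∑ k ∈ Finset.range K, f k = β * (F 0 - F K) := by
    intro K
    rw [Finset.mul_sum]
    calc ∑ k ∈ Finset.range K, 2 * ((m:ℝ) - n) * f k
        = ∑ k ∈ Finset.range K, β * (F k - F (k+1)) := Finset.sum_congr rfl fun k _ => key k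
      _ = β * ∑ k ∈ Finset.range K, (F k - F (k+1)) := by rw [Finset.mul_sum]
      _ = β * (F 0 - F K) := by rw [Finset.sum_range_sub' F K]
  -- Fourier coefficients tend to zero along shifted sequences
  have hb0 : ∀ a : ℤ, Tendsto (fun k : ℕ => b (a + k)) atTop (nhds 0) := by
    intro a
    have h1 : Tendsto (fun k : ℕ => ((a:ℝ)+k)^4 * b (a+k)^2) atTop (nhds 0) :=
      (hb2 a).tendsto_atTop_zero
    have hsq : Tendsto (fun k : ℕ => b (a+k)^2) atTop (nhds 0) := by
      apply squeeze_zero_norm' _ h1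
      filter_upwards [eventually_ge_atTop (1 - a).toNat] with k hk
      have hk1 : (1:ℝ) ≤ (a:ℝ) + k := by
        have : 1 - a ≤ (k:ℤ) := le_trans (Int.self_le_toNat _) (by exact_mod_cast hk)
        have : (1:ℤ) ≤ a + k := by omega
        exact_mod_cast this
      have h14 : (1:ℝ) ≤ ((a:ℝ)+k)^4 := one_le_pow₀ hk1
      rw [Real.norm_eq_abs, abs_of_nonneg (sq_nonneg _)]
      nlinarith [sq_nonneg (b (a+k))]
    have habs : Tendsto (fun k : ℕ => |b (a+k)|) atTop (nhds 0) := by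
      have hc : Tendsto (fun x : ℝ => Real.sqrt x) (nhds 0) (nhds 0) := by
        simpa using (Real.continuous_sqrt.tendsto 0)
      have := hc.comp hsq
      refine this.congr fun k => ?_
      simp [Function.comp, Real.sqrt_sq_eq_abs]
    exact squeeze_zero_norm (fun k => le_of_eq (Real.norm_eq_abs _)) habs
  have hFt : Tendsto F atTop (nhds 0) := by
    have h1 : Tendsto (fun k : ℕ => b (m + k - 1)) atTop (nhds 0) :=
      (hb0 (m - 1)).congr fun k => by rw [show m - 1 + (k:ℤ) = m + k - 1 by ring]
    have h2 : Tendsto (fun k : ℕ => b (n + k - 1)) atTop (nhds 0) :=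
      (hb0 (n - 1)).congr fun k => by rw [show n - 1 + (k:ℤ) = n + k - 1 by ring]
    have := (h1.mul (hb0 n)).sub (h2.mul (hb0 m))
    simpa [hFdef] using this
  -- assemble
  have hlim1 : Tendsto (fun K => 2 * ((m:ℝ) - n) * ∑ k ∈ Finset.range K, f k) atTop
      (nhds (2 * ((m:ℝ) - n) * ∑' k, f k)) :=
    (hsf.hasSum.tendsto_sum_nat).const_mul _
  have hlim2 : Tendsto (fun K => 2 * ((m:ℝ) - n) * ∑ k ∈ Finset.range K, f k) atTop
      (nhds (β * (F 0 - 0))) := by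
    have : Tendsto (fun K => β * (F 0 - F K)) atTop (nhds (β * (F 0 - 0))) :=
      (tendsto_const_nhds.sub hFt).const_mul β
    exact this.congr fun K => (tel K).symm
  have hEq : 2 * ((m:ℝ) - n) * ∑' k, f k = β * F 0 := by
    have := tendsto_nhds_unique hlim1 hlim2
    simpa using this
  have hF0 : F 0 = b (m - 1) * b n - b (n - 1) * b m := by
    simp [hFdef]
  rw [hF0] at hEq
  rw [div_eq_iff hmn']
  field_simp
  linear_combination -hEq
end
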